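/- Let K be a field and f, g, h polynomials in (K[x_1])[x_2,...,x_n] none lying in K[x_1]. If lcm(lm(f), lm(g)) is divisible by lm(h), then λ·S(f,g) = (λ·lcm(lt(f),lt(g)) / lcm(lt(f),lt(h)))·S(f,h) − (λ·lcm(lt(f),lt(g)) / lcm(lt(g),lt(h)))·S(g,h), where λ = lc(h)/gcd(lcm(lc(f),lc(g)), lc(h)) ∈ K[x_1], and the displayed quotients of terms are genuine terms (the divisions are exact). -/
import Mathlib


open MvPolynomial

/-- The leading monomial (exponent) of `f` with respect to the monomial order `m`,
taken over the coefficient ring. -/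
noncomputable def mdeg {σ : Type*} (m : MonomialOrder σ) {R : Type*} [CommSemiring R]
    (f : MvPolynomial σ R) : σ →₀ ℕ :=
  m.toSyn.symm (f.support.sup fun d => m.toSyn d)

/-- The leading coefficient of `f` with respect to the monomial order `m`. -/
noncomputable def lC {σ : Type*} (m : MonomialOrder σ) {R : Type*} [CommSemiring R]
    (f : MvPolynomial σ R) : R :=
  f.coeff (mdeg m f)

/-- The leading term of `f` with respect to the monomial order `m`. -/
noncomputable def lT {σ : Type*} (m : MonomialOrder σ) {R : Type*} [CommSemiring R]
    (f : MvPolynomial σ R) : MvPolynomial σ R :=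
  monomial (mdeg m f) (lC m f)

/-- `d` is a greatest common divisor of `a` and `b` (gcd's are unique up to units). -/
def IsGcd {α : Type*} [CommMonoid α] (d a b : α) : Prop :=
  d ∣ a ∧ d ∣ b ∧ ∀ e, e ∣ a → e ∣ b → e ∣ d

/-- `l` is a least common multiple of `a` and `b` (lcm's are unique up to units). -/
def IsLcm {α : Type*} [CommMonoid α] (l a b : α) : Prop :=
  a ∣ l ∧ b ∣ l ∧ ∀ e, a ∣ e → b ∣ e → l ∣ e


private lemma tri_lC_ne_zero {σ : Type*} (m : MonomialOrder σ) {R : Type*} [CommSemiring R]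
    {f : MvPolynomial σ R} (hf : f ≠ 0) : lC m f ≠ 0 := by
  unfold lC mdeg
  obtain ⟨d, hd, hds⟩ := Finset.exists_mem_eq_sup f.support (support_nonempty.2 hf)
    (fun d => m.toSyn d)
  rw [hds, m.toSyn.symm_apply_apply]
  exact mem_support_iff.mp hd

private lemma tri_mul4 {σ R : Type*} [CommSemiring R] (a b : R) (s t : σ →₀ ℕ)
    (p : MvPolynomial σ R) :
    C a * monomial s (1:R) * (C b * monomial t 1 * p) = monomial (s+t) (a*b) * p := by
  rw [show C a * monomial s (1:R) * (C b * monomial t 1 * p)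
      = C (a*b) * (monomial s (1:R) * monomial t 1) * p by rw [C_mul]; ring,
    monomial_mul, one_mul, C_mul_monomial, mul_one]

private lemma tri_mul3 {σ R : Type*} [CommSemiring R] (a b : R) (s : σ →₀ ℕ)
    (p : MvPolynomial σ R) :
    C a * (C b * monomial s (1:R) * p) = monomial s (a*b) * p := by
  rw [show C a * (C b * monomial s (1:R) * p) = C (a*b) * monomial s (1:R) * p
      by rw [C_mul]; ring, C_mul_monomial, mul_one]

/-- **Lemma (triangular identity of S-polynomials over `K[x₁]`).**  If
`lcm(lm f, lm g)` is divisible by `lm h`, then with `λ = lc h / gcd(lcm(lc f,lc g), lc h)`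
one has `λ·S(f,g) = (λ·lcm(lt f,lt g)/lcm(lt f,lt h))·S(f,h)
− (λ·lcm(lt f,lt g)/lcm(lt g,lt h))·S(g,h)`, the displayed quotients of terms being
genuine terms (the divisions of coefficients and of monomials are exact). -/
theorem triangular_identity {σ K : Type*} [Field K] (m : MonomialOrder σ)
    (f g h : MvPolynomial σ (Polynomial K))
    (hf : f ∉ Set.range (C : Polynomial K → MvPolynomial σ (Polynomial K)))
    (hg : g ∉ Set.range (C : Polynomial K → MvPolynomial σ (Polynomial K)))
    (hh : h ∉ Set.range (C : Polynomial K → MvPolynomial σ (Polynomial K)))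
    (hdvd : mdeg m h ≤ mdeg m f ⊔ mdeg m g)
    (γfg γfh γgh : σ →₀ ℕ)
    (hγfg : γfg = mdeg m f ⊔ mdeg m g)
    (hγfh : γfh = mdeg m f ⊔ mdeg m h)
    (hγgh : γgh = mdeg m g ⊔ mdeg m h)
    (Mfg Mfh Mgh ufg vfg ufh vfh ugh vgh d lam : Polynomial K)
    (hMfg : IsLcm Mfg (lC m f) (lC m g)) (hufg : Mfg = lC m f * ufg)
    (hvfg : Mfg = lC m g * vfg)
    (hMfh : IsLcm Mfh (lC m f) (lC m h)) (hufh : Mfh = lC m f * ufh)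
    (hvfh : Mfh = lC m h * vfh)
    (hMgh : IsLcm Mgh (lC m g) (lC m h)) (hugh : Mgh = lC m g * ugh)
    (hvgh : Mgh = lC m h * vgh)
    (hd : IsGcd d Mfg (lC m h)) (hlam : lC m h = d * lam) :
    γfh ≤ γfg ∧ γgh ≤ γfg ∧
    ∃ w1 w2 : Polynomial K,
      lam * Mfg = w1 * Mfh ∧ lam * Mfg = w2 * Mgh ∧
      C lam * (C ufg * monomial (γfg - mdeg m f) 1 * f
                - C vfg * monomial (γfg - mdeg m g) 1 * g) =
        C w1 * monomial (γfg - γfh) 1 *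
            (C ufh * monomial (γfh - mdeg m f) 1 * f
              - C vfh * monomial (γfh - mdeg m h) 1 * h)
          - C w2 * monomial (γfg - γgh) 1 *
            (C ugh * monomial (γgh - mdeg m g) 1 * g
              - C vgh * monomial (γgh - mdeg m h) 1 * h) := by
  have hf0 : f ≠ 0 := by rintro rfl; exact hf ⟨0, by simp⟩
  have hg0 : g ≠ 0 := by rintro rfl; exact hg ⟨0, by simp⟩
  have hh0 : h ≠ 0 := by rintro rfl; exact hh ⟨0, by simp⟩
  have lcf : lC m f ≠ 0 := tri_lC_ne_zero m hf0
  have lcg : lC m g ≠ 0 := tri_lC_ne_zero m hg0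
  have lch : lC m h ≠ 0 := tri_lC_ne_zero m hh0
  have h1 : mdeg m f ≤ γfg := hγfg ▸ le_sup_left
  have h2 : mdeg m g ≤ γfg := hγfg ▸ le_sup_right
  have h3 : mdeg m h ≤ γfg := hγfg ▸ hdvd
  have hfh_le : γfh ≤ γfg := by rw [hγfh]; exact sup_le h1 h3
  have hgh_le : γgh ≤ γfg := by rw [hγgh]; exact sup_le h2 h3
  refine ⟨hfh_le, hgh_le, ?_⟩
  obtain ⟨e, he⟩ := hd.1
  have hhdvd : lC m h ∣ lam * Mfg := ⟨e, by rw [he, hlam]; ring⟩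
  obtain ⟨w1, hw1⟩ := hMfh.2.2 (lam * Mfg) ⟨lam * ufg, by rw [hufg]; ring⟩ hhdvd
  obtain ⟨w2, hw2⟩ := hMgh.2.2 (lam * Mfg) ⟨lam * vfg, by rw [hvfg]; ring⟩ hhdvd
  have hw1' : lam * Mfg = w1 * Mfh := by rw [hw1]; ring
  have hw2' : lam * Mfg = w2 * Mgh := by rw [hw2]; ring
  have e1 : lam * ufg = w1 * ufh := by
    apply mul_left_cancel₀ lcf
    linear_combination hw1' - lam * hufg + w1 * hufh
  have e2 : lam * vfg = w2 * ugh := by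
    apply mul_left_cancel₀ lcg
    linear_combination hw2' - lam * hvfg + w2 * hugh
  have e3 : w1 * vfh = w2 * vgh := by
    apply mul_left_cancel₀ lch
    linear_combination -hw1' + hw2' - w1 * hvfh + w2 * hvgh
  have hFfh : mdeg m f ≤ γfh := hγfh ▸ le_sup_left
  have hHfh : mdeg m h ≤ γfh := hγfh ▸ le_sup_right
  have hGgh : mdeg m g ≤ γgh := hγgh ▸ le_sup_left
  have hHgh : mdeg m h ≤ γgh := hγgh ▸ le_sup_right
  have eA : γfg - γfh + (γfh - mdeg m f) = γfg - mdeg m f := tsub_add_tsub_cancel hfh_le hFfh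
  have eH1 : γfg - γfh + (γfh - mdeg m h) = γfg - mdeg m h := tsub_add_tsub_cancel hfh_le hHfh
  have eB : γfg - γgh + (γgh - mdeg m g) = γfg - mdeg m g := tsub_add_tsub_cancel hgh_le hGgh
  have eH2 : γfg - γgh + (γgh - mdeg m h) = γfg - mdeg m h := tsub_add_tsub_cancel hgh_le hHgh
  refine ⟨w1, w2, hw1', hw2', ?_⟩
  rw [mul_sub, mul_sub, mul_sub, tri_mul3, tri_mul3, tri_mul4, tri_mul4, tri_mul4, tri_mul4,
    eA, eH1, eB, eH2, e1, e2, e3]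
  ring
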